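/- Let m = s + t with s = t - 1 (or s = t - 2), let γ be a primitive element of F_{2^t}, π: F_{2^t} → F_2^t a linear isomorphism, and for i = 1,...,t define f_i(y,x) = π(γ^{[y]+i})·x where [y] is the integer represented by y ∈ F_2^s. Then for every nonzero c ∈ F_2^t, the function f_c = c_1 f_1 + ... + c_t f_t satisfies W_{f_c}(β,α) ∈ {0, ±2^t} for all (β,α); i.e., F = (f_1,...,f_t) is a vectorial plateaued function with amplitude 2^t. -/

import Mathlib

open Finset

/-- mod-2 inner product on `F_2^n`. -/
def dotp {n : ℕ} (a b : Fin n → ZMod 2) : ZMod 2 := ∑ i, a i * b i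

/-- `(-1)^v` for `v ∈ F_2`. -/
def sgn (v : ZMod 2) : ℤ := (-1 : ℤ) ^ v.val

/-- Walsh transform of a function on the product domain F_2^s × F_2^t. -/
def walshP {s t : ℕ} (f : (Fin s → ZMod 2) × (Fin t → ZMod 2) → ZMod 2)
    (β : Fin s → ZMod 2) (α : Fin t → ZMod 2) : ℤ :=
  ∑ p : (Fin s → ZMod 2) × (Fin t → ZMod 2), sgn (f p + dotp β p.1 + dotp α p.2)

/-- Integer inner product of the ±1-sequences of two Boolean functions on F_2^s × F_2^t. -/
def seqInnerP {s t : ℕ} (f g : (Fin s → ZMod 2) × (Fin t → ZMod 2) → ZMod 2) : ℤ :=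
  ∑ p : (Fin s → ZMod 2) × (Fin t → ZMod 2), sgn (f p) * sgn (g p)

/-- the integer `[y]` represented by the binary vector `y ∈ F_2^s`. -/
def intRep {s : ℕ} (y : Fin s → ZMod 2) : ℕ := ∑ j : Fin s, (y j).val * 2 ^ (j : ℕ)

lemma sgn_add : ∀ a b : ZMod 2, sgn (a + b) = sgn a * sgn b := by decide

lemma sgn_cases : ∀ a : ZMod 2, sgn a = 1 ∨ sgn a = -1 := by decide

lemma zmod2_add_eq_zero : ∀ a b : ZMod 2, a + b = 0 ↔ a = b := by decide

lemma dotp_add_left {n : ℕ} (a b x : Fin n → ZMod 2) :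
    dotp (a + b) x = dotp a x + dotp b x := by
  simp [dotp, add_mul, Finset.sum_add_distrib]

lemma dotp_add_right {n : ℕ} (v x y : Fin n → ZMod 2) :
    dotp v (x + y) = dotp v x + dotp v y := by
  simp [dotp, mul_add, Finset.sum_add_distrib]

lemma dotp_smul_left {n : ℕ} (c : ZMod 2) (a x : Fin n → ZMod 2) :
    dotp (c • a) x = c * dotp a x := by
  simp [dotp, Finset.mul_sum, mul_assoc]

lemma dotp_sum_left {n : ℕ} {ι : Type*} (S : Finset ι) (w : ι → (Fin n → ZMod 2))
    (x : Fin n → ZMod 2) : dotp (∑ i ∈ S, w i) x = ∑ i ∈ S, dotp (w i) x := by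
  simp [dotp, Finset.sum_mul]
  rw [Finset.sum_comm]

lemma dotp_single {n : ℕ} (v : Fin n → ZMod 2) (i : Fin n) :
    dotp v (Pi.single i 1) = v i := by
  rw [dotp, Finset.sum_eq_single i]
  · simp
  · intro b _ hb; simp [Pi.single_eq_of_ne hb]
  · simp

lemma charSum {n : ℕ} (v : Fin n → ZMod 2) :
    ∑ x : Fin n → ZMod 2, sgn (dotp v x) = if v = 0 then (2 ^ n : ℤ) else 0 := by
  split_ifs with h
  · subst h
    have : ∀ x : Fin n → ZMod 2, dotp 0 x = 0 := by intro x; simp [dotp]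
    simp only [this]
    simp [sgn, Fintype.card_fun]
  · obtain ⟨i, hi⟩ := Function.ne_iff.1 h
    have hinv : Function.Involutive (fun x : Fin n → ZMod 2 => x + Pi.single i 1) := by
      intro x; funext j; by_cases hj : j = i <;> simp [hj]
      ring_nf
      rw [show (2 : ZMod 2) = 0 by decide, zero_add]
    have hstep : ∀ x : Fin n → ZMod 2,
        sgn (dotp v (x + Pi.single i 1)) = - sgn (dotp v x) := by
      intro x
      rw [dotp_add_right, dotp_single, sgn_add]
      have hcase : ∀ u : ZMod 2, u = 0 ∨ u = 1 := by decide
      rcases hcase (v i) with h0 | h1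
      · exact absurd h0 hi
      · rw [h1]; simp [sgn, ZMod.val_one]
    have hS : (∑ x : Fin n → ZMod 2, sgn (dotp v x))
        = - ∑ x : Fin n → ZMod 2, sgn (dotp v x) := by
      conv_lhs => rw [← Equiv.sum_comp hinv.toPerm (fun x => sgn (dotp v x))]
      simp only [Function.Involutive.coe_toPerm, hstep, Finset.sum_neg_distrib]
    omega

lemma intRep_succ {s : ℕ} (y : Fin (s + 1) → ZMod 2) :
    intRep y = (y 0).val + 2 * intRep (fun j : Fin s => y j.succ) := by
  rw [intRep, Fin.sum_univ_succ]
  simp [intRep, Finset.mul_sum]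
  ring_nf

lemma intRep_lt {s : ℕ} (y : Fin s → ZMod 2) : intRep y < 2 ^ s := by
  induction s with
  | zero => simp [intRep]
  | succ s ih =>
    rw [intRep_succ]
    have h1 := ih (fun j : Fin s => y j.succ)
    have h2 : (y 0).val < 2 := ZMod.val_lt _
    have : (2:ℕ) ^ (s+1) = 2 * 2 ^ s := by ring
    omega

lemma intRep_injective {s : ℕ} : Function.Injective (intRep (s := s)) := by
  induction s with
  | zero => intro a b _; funext j; exact j.elim0
  | succ s ih =>
    intro a b hab
    rw [intRep_succ, intRep_succ] at hab
    have ha2 : (a 0).val < 2 := ZMod.val_lt _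
    have hb2 : (b 0).val < 2 := ZMod.val_lt _
    have h0 : (a 0).val = (b 0).val := by omega
    have htail : intRep (fun j : Fin s => a j.succ) = intRep (fun j : Fin s => b j.succ) := by
      omega
    have h0' : a 0 = b 0 := ZMod.val_injective _ h0
    have ht' := ih htail
    funext j
    rcases Fin.eq_zero_or_eq_succ j with rfl | ⟨k, rfl⟩
    · exact h0'
    · exact congrFun ht' k

open Module in
lemma gamma_linearIndependent {t : ℕ} (ht : t ≠ 0) (γ : GaloisField 2 t)
    (hγ : ∀ z : GaloisField 2 t, z ≠ 0 → ∃ n : ℕ, γ ^ n = z) :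
    LinearIndependent (ZMod 2) fun i : Fin t => γ ^ (i : ℕ) := by
  have hint : IsIntegral (ZMod 2) γ := IsIntegral.of_finite _ _
  have hA : Algebra.adjoin (ZMod 2) ({γ} : Set (GaloisField 2 t)) = ⊤ := by
    rw [eq_top_iff]
    intro z _
    rcases eq_or_ne z 0 with rfl | hz
    · exact Subalgebra.zero_mem _
    · obtain ⟨n, rfl⟩ := hγ z hz
      exact Subalgebra.pow_mem _ (Algebra.self_mem_adjoin_singleton _ _) _
  haveI : Fintype (GaloisField 2 t) := Fintype.ofFinite _
  have hfr : finrank (ZMod 2) (GaloisField 2 t) = t := by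
    have h1 : Fintype.card (GaloisField 2 t)
        = Fintype.card (ZMod 2) ^ finrank (ZMod 2) (GaloisField 2 t) :=
      card_eq_pow_finrank
    have hcard : Nat.card (GaloisField 2 t) = 2 ^ t := GaloisField.card 2 t ht
    rw [Nat.card_eq_fintype_card] at hcard
    rw [ZMod.card, hcard] at h1
    exact (Nat.pow_right_injective (le_refl 2) h1).symm
  have hfA : finrank (ZMod 2) (Algebra.adjoin (ZMod 2) ({γ} : Set (GaloisField 2 t)))
      = (minpoly (ZMod 2) γ).natDegree := by
    rw [(Algebra.adjoin.powerBasis hint).finrank, Algebra.adjoin.powerBasis_dim]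
  rw [hA] at hfA
  have htop : finrank (ZMod 2) (⊤ : Subalgebra (ZMod 2) (GaloisField 2 t))
      = finrank (ZMod 2) (GaloisField 2 t) :=
    Subalgebra.topEquiv.toLinearEquiv.finrank_eq
  have hdt : (minpoly (ZMod 2) γ).natDegree = t := by rw [← hfA, htop, hfr]
  have hli := linearIndependent_pow (K := ZMod 2) γ
  rw [hdt] at hli
  exact hli

lemma pow_mul_unique {s t : ℕ} (hst : s < t) (γ P w : GaloisField 2 t)
    (hγ : ∀ z : GaloisField 2 t, z ≠ 0 → ∃ n : ℕ, γ ^ n = z) (hP : P ≠ 0)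
    (hlin : LinearIndependent (ZMod 2) fun i : Fin t => γ ^ (i : ℕ))
    (a b : Fin s → ZMod 2)
    (hA : γ ^ (intRep a + 1) * P = w) (hB : γ ^ (intRep b + 1) * P = w) : a = b := by
  rcases Nat.eq_zero_or_pos s with rfl | hs
  · funext j; exact j.elim0
  have ht2 : 2 ≤ t := by omega
  have hγ0 : γ ≠ 0 := by
    have h1 := hlin.ne_zero ⟨1, by omega⟩
    simpa using h1
  set γu : (GaloisField 2 t)ˣ := Units.mk0 γ hγ0 with hγu
  have hval : ∀ k : ℕ, ((γu ^ k : (GaloisField 2 t)ˣ) : GaloisField 2 t) = γ ^ k := by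
    intro k; rw [Units.val_pow_eq_pow_val]; rfl
  haveI : Fintype (GaloisField 2 t) := Fintype.ofFinite _
  haveI : DecidableEq (GaloisField 2 t) := Classical.decEq _
  have hopos : 0 < orderOf γu := orderOf_pos γu
  have hsub : (Finset.univ.erase (0 : GaloisField 2 t)) ⊆
      (Finset.range (orderOf γu)).image (fun n => γ ^ n) := by
    intro z hz
    obtain ⟨n, rfl⟩ := hγ z (Finset.ne_of_mem_erase hz)
    refine Finset.mem_image.2 ⟨n % orderOf γu, Finset.mem_range.2 (Nat.mod_lt _ hopos), ?_⟩
    rw [← hval, ← hval, pow_mod_orderOf]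
  have hcardF : Fintype.card (GaloisField 2 t) = 2 ^ t := by
    rw [← Nat.card_eq_fintype_card]; exact GaloisField.card 2 t (by omega)
  have horder : 2 ^ t - 1 ≤ orderOf γu := by
    have h1 := Finset.card_le_card hsub
    have h2 : (Finset.univ.erase (0 : GaloisField 2 t)).card
        = Fintype.card (GaloisField 2 t) - 1 := by
      rw [Finset.card_erase_of_mem (Finset.mem_univ _), Finset.card_univ]
    have h3 := Finset.card_image_le (s := Finset.range (orderOf γu))
      (f := fun n => γ ^ n)
    rw [Finset.card_range] at h3
    omega
  have hcancel : γ ^ (intRep a + 1) = γ ^ (intRep b + 1) :=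
    mul_right_cancel₀ hP (hA.trans hB.symm)
  have hu : γu ^ (intRep a + 1) = γu ^ (intRep b + 1) :=
    Units.ext (by rw [hval, hval]; exact hcancel)
  have hlta : intRep a < 2 ^ s := intRep_lt a
  have hltb : intRep b < 2 ^ s := intRep_lt b
  have hpow : 2 ^ (s + 1) ≤ 2 ^ t := Nat.pow_le_pow_right (by norm_num) (by omega)
  have hpow2 : (2:ℕ) ^ (s + 1) = 2 * 2 ^ s := by ring
  have hpows : (2:ℕ) ≤ 2 ^ s := by
    calc (2:ℕ) = 2 ^ 1 := by norm_num
    _ ≤ 2 ^ s := Nat.pow_le_pow_right (by norm_num) hs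
  have hmema : intRep a + 1 ∈ Set.Iio (orderOf γu) := by
    simp only [Set.mem_Iio]; omega
  have hmemb : intRep b + 1 ∈ Set.Iio (orderOf γu) := by
    simp only [Set.mem_Iio]; omega
  have heq : intRep a + 1 = intRep b + 1 := pow_injOn_Iio_orderOf hmema hmemb hu
  exact intRep_injective (by omega)

lemma vadd_eq_zero {n : ℕ} (a b : Fin n → ZMod 2) : a + b = 0 ↔ a = b := by
  constructor
  · intro h; funext j; exact (zmod2_add_eq_zero _ _).1 (congrFun h j)
  · rintro rfl; funext j; exact (zmod2_add_eq_zero (a j) (a j)).2 rfl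

/-- for the Maiorana-McFarland functions
f_i(y,x) = π(γ^{[y]+i})·x (i = 1,…,t) of Construction 1, with γ primitive in
F_{2^t} and π a linear isomorphism, every nonzero linear combination
f_c = c_1 f_1 + … + c_t f_t is plateaued with spectrum ⊆ {0, ±2^t}. -/
theorem stmt_5 {m s t : ℕ} (hm : m = s + t) (hst : s + 1 = t ∨ s + 2 = t)
    (γ : GaloisField 2 t) (hγ : ∀ z : GaloisField 2 t, z ≠ 0 → ∃ n : ℕ, γ ^ n = z)
    (π : GaloisField 2 t ≃ₗ[ZMod 2] (Fin t → ZMod 2))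
    (c : Fin t → ZMod 2) (hc : c ≠ 0)
    (β : Fin s → ZMod 2) (α : Fin t → ZMod 2) :
    walshP (fun p : (Fin s → ZMod 2) × (Fin t → ZMod 2) =>
        ∑ i : Fin t, c i * dotp (π (γ ^ (intRep p.1 + (i : ℕ) + 1))) p.2) β α ∈
      ({0, 2 ^ t, -(2 ^ t)} : Set ℤ) := by
  classical
  have ht0 : t ≠ 0 := by omega
  have hstlt : s < t := by omega
  set P : GaloisField 2 t := ∑ i : Fin t, c i • γ ^ (i : ℕ) with hPdef
  have hlin := gamma_linearIndependent ht0 γ hγ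
  have hP : P ≠ 0 := by
    intro h0
    apply hc
    funext i
    exact Fintype.linearIndependent_iff.1 hlin c h0 i
  set u : (Fin s → ZMod 2) → (Fin t → ZMod 2) :=
    fun y => π (γ ^ (intRep y + 1) * P) with hu
  have hf : ∀ p : (Fin s → ZMod 2) × (Fin t → ZMod 2),
      (∑ i : Fin t, c i * dotp (π (γ ^ (intRep p.1 + (i : ℕ) + 1))) p.2)
        = dotp (u p.1) p.2 := by
    intro p
    have h2 : ∑ i : Fin t, c i • γ ^ (intRep p.1 + (i : ℕ) + 1)
        = γ ^ (intRep p.1 + 1) * P := by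
      rw [hPdef, Finset.mul_sum]
      apply Finset.sum_congr rfl
      intro i _
      rw [show intRep p.1 + (i : ℕ) + 1 = (intRep p.1 + 1) + (i : ℕ) by omega,
        pow_add, mul_smul_comm]
    calc ∑ i : Fin t, c i * dotp (π (γ ^ (intRep p.1 + (i : ℕ) + 1))) p.2
        = ∑ i : Fin t, dotp (c i • π (γ ^ (intRep p.1 + (i : ℕ) + 1))) p.2 := by
          simp_rw [dotp_smul_left]
      _ = dotp (∑ i : Fin t, c i • π (γ ^ (intRep p.1 + (i : ℕ) + 1))) p.2 :=
          (dotp_sum_left _ _ _).symm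
      _ = dotp (u p.1) p.2 := by
          rw [hu]
          congr 1
          simp_rw [← map_smul π, ← map_sum π, h2]
  rw [walshP]
  simp only [hf]
  rw [Fintype.sum_prod_type]
  have hinner : ∀ y : Fin s → ZMod 2,
      ∑ x : Fin t → ZMod 2, sgn (dotp (u y) x + dotp β y + dotp α x)
        = sgn (dotp β y) * (if u y + α = 0 then (2 ^ t : ℤ) else 0) := by
    intro y
    rw [← charSum (u y + α), Finset.mul_sum]
    apply Finset.sum_congr rfl
    intro x _
    rw [dotp_add_left, show dotp (u y) x + dotp β y + dotp α x
      = dotp β y + (dotp (u y) x + dotp α x) by ring, sgn_add]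
  simp only [hinner]
  have hsplit : ∑ y : Fin s → ZMod 2,
      sgn (dotp β y) * (if u y + α = 0 then (2 ^ t : ℤ) else 0)
      = (∑ y ∈ Finset.univ.filter (fun y : Fin s → ZMod 2 => u y + α = 0),
          sgn (dotp β y)) * 2 ^ t := by
    rw [Finset.sum_mul, Finset.sum_filter]
    apply Finset.sum_congr rfl
    intro y _
    split_ifs <;> ring
  rw [hsplit]
  set T := Finset.univ.filter (fun y : Fin s → ZMod 2 => u y + α = 0) with hT
  have hcond : ∀ y ∈ T, γ ^ (intRep y + 1) * P = π.symm α := by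
    intro y hy
    have h1 : u y = α := (vadd_eq_zero _ _).1 (Finset.mem_filter.1 hy).2
    have h2 : π.symm (u y) = π.symm α := congrArg _ h1
    rwa [hu, LinearEquiv.symm_apply_apply] at h2
  have hcard : T.card ≤ 1 := by
    apply Finset.card_le_one.2
    intro a ha b hb
    exact pow_mul_unique hstlt γ P (π.symm α) hγ hP hlin a b (hcond a ha) (hcond b hb)
  rcases T.eq_empty_or_nonempty with he | ⟨a, ha⟩
  · rw [he]
    simp
  · have h1 : T = {a} := by
      apply Finset.eq_singleton_iff_unique_mem.2
      exact ⟨ha, fun b hb => by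
        have := Finset.card_le_one.1 hcard b hb a ha; exact this⟩
    rw [h1, Finset.sum_singleton]
    rcases sgn_cases (dotp β a) with h | h <;> rw [h]
    · simp only [one_mul]
      right; left; rfl
    · right; right
      simp
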